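/- Let V be a finite-dimensional subspace of functions ℝ → ℝ whose elements are continuously differentiable on [0,1], let Q be a finite-dimensional subspace of functions continuous on [0,1], and let a : ℝ → ℝ be continuous on [0,1]. Let (u_h, p_h) be a semi-discrete solution on [0,T]. Then for all 0 ≤ s ≤ t ≤ T the energy identity E_h(t) = E_h(s) − ∫ₛᵗ ∫₀¹ a(x)·u_h(r)(x)² dx dr holds, where E_h(t) = (1/2)(‖u_h(t)‖² + ‖p_h(t)‖²). In particular, if a ≥ 0 on [0,1], then E_h is monotonically decreasing on [0,T]. -/

import Mathlib

open MeasureTheory Set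

/-- The L²(0,1) inner product `(f,g) = ∫₀¹ f g dx`. -/
noncomputable def L2ip (f g : ℝ → ℝ) : ℝ := ∫ x in (0:ℝ)..1, f x * g x

/-- The squared L²(0,1) norm `‖f‖² = ∫₀¹ f² dx`. -/
noncomputable def L2nsq (f : ℝ → ℝ) : ℝ := ∫ x in (0:ℝ)..1, (f x) ^ 2

/-- The L²(0,1) norm. -/
noncomputable def L2nrm (f : ℝ → ℝ) : ℝ := Real.sqrt (L2nsq f)

/-- `t ↦ (uh t, ph t)` is a continuously differentiable map from `[0,T]` into
`V × Q` (with time derivatives `uh', ph'`) solving the Galerkin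
semi-discretization of the damped wave system:
`(∂ₜ uh, v̄) − (ph, v̄′) + (a uh, v̄) = 0` for all `v̄ ∈ V` and
`(∂ₜ ph, q̄) + (uh′, q̄) = 0` for all `q̄ ∈ Q`. -/
def IsSemiDiscreteSolution (T : ℝ) (a : ℝ → ℝ) (V Q : Submodule ℝ (ℝ → ℝ))
    (uh ph uh' ph' : ℝ → ℝ → ℝ) : Prop :=
  (∀ t ∈ Icc (0:ℝ) T, uh t ∈ V ∧ ph t ∈ Q ∧ uh' t ∈ V ∧ ph' t ∈ Q) ∧
  (∀ t ∈ Icc (0:ℝ) T, ∀ x : ℝ,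
      HasDerivAt (fun s => uh s x) (uh' t x) t ∧
      HasDerivAt (fun s => ph s x) (ph' t x) t) ∧
  (∀ x : ℝ, ContinuousOn (fun t => uh' t x) (Icc (0:ℝ) T) ∧
      ContinuousOn (fun t => ph' t x) (Icc (0:ℝ) T)) ∧
  (∀ t ∈ Icc (0:ℝ) T,
      (∀ v ∈ V, L2ip (uh' t) v - L2ip (ph t) (deriv v)
          + L2ip (fun x => a x * uh t x) v = 0) ∧
      (∀ q ∈ Q, L2ip (ph' t) q + L2ip (deriv (uh t)) q = 0))

lemma sep_points (n : ℕ) : ∀ (W : Submodule ℝ (ℝ → ℝ)), FiniteDimensional ℝ W →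
    Module.finrank ℝ W ≤ n →
    ∃ (m : ℕ) (ξ : Fin m → ℝ), ∀ w ∈ W, (∀ j, w (ξ j) = 0) → w = 0 := by
  induction n with
  | zero =>
    intro W hfd hrk
    refine ⟨0, Fin.elim0, fun w hw _ => ?_⟩
    have : W = ⊥ := by
      have := Submodule.finrank_eq_zero (R := ℝ) (S := W)
      exact this.mp (Nat.le_zero.mp hrk)
    simpa [this, Submodule.mem_bot] using hw
  | succ n ih =>
    intro W hfd hrk
    by_cases hW : W = ⊥
    · refine ⟨0, Fin.elim0, fun w hw _ => ?_⟩
      simpa [hW, Submodule.mem_bot] using hw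
    · obtain ⟨w0, hw0W, hw0⟩ := Submodule.exists_mem_ne_zero_of_ne_bot hW
      obtain ⟨x0, hx0⟩ : ∃ x, w0 x ≠ 0 := by
        by_contra h
        push_neg at h
        exact hw0 (funext h)
      set W' : Submodule ℝ (ℝ → ℝ) := W ⊓ LinearMap.ker (LinearMap.proj (R := ℝ) (φ := fun _ : ℝ => ℝ) x0) with hW'
      have hle : W' ≤ W := inf_le_left
      haveI : FiniteDimensional ℝ W' := Submodule.finiteDimensional_of_le hle
      have hlt : W' < W := by
        refine lt_of_le_of_ne hle (fun h => ?_)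
        have : w0 ∈ W' := h ▸ hw0W
        exact hx0 (this.2)
      have hrk' : Module.finrank ℝ W' ≤ n :=
        Nat.lt_succ_iff.mp (lt_of_lt_of_le (Submodule.finrank_lt_finrank_of_lt hlt) hrk)
      obtain ⟨m, ξ, hξ⟩ := ih W' ‹_› hrk'
      refine ⟨m + 1, Fin.cons x0 ξ, fun w hw hz => ?_⟩
      have hwx0 : w x0 = 0 := hz 0
      have hwW' : w ∈ W' := ⟨hw, hwx0⟩
      exact hξ w hwW' (fun j => hz j.succ)

lemma coeff_rep (W : Submodule ℝ (ℝ → ℝ)) [FiniteDimensional ℝ W] :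
    ∃ (n : ℕ) (e : Fin n → (ℝ → ℝ)) (m : ℕ) (ξ : Fin m → ℝ) (A : Fin n → Fin m → ℝ),
      (∀ i, e i ∈ W) ∧
      (∀ w ∈ W, ∀ y, w y = ∑ i, (∑ j, A i j * w (ξ j)) * e i y) := by
  obtain ⟨m, ξ, hξ⟩ := sep_points (Module.finrank ℝ W) W ‹_› le_rfl
  -- evaluation map
  let L : W →ₗ[ℝ] (Fin m → ℝ) :=
    { toFun := fun w j => (w : ℝ → ℝ) (ξ j)
      map_add' := by intros; rfl
      map_smul' := by intros; rfl }
  have hker : LinearMap.ker L = ⊥ := by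
    rw [LinearMap.ker_eq_bot']
    intro w hw
    have : (w : ℝ → ℝ) = 0 := hξ w w.2 (fun j => congrFun hw j)
    exact Subtype.ext this
  obtain ⟨G, hG⟩ := L.exists_leftInverse_of_injective hker
  let b := Module.finBasis ℝ W
  set n := Module.finrank ℝ W
  refine ⟨n, fun i => (b i : ℝ → ℝ), m, ξ,
    fun i j => b.repr (G (fun k => if j = k then 1 else 0)) i, fun i => (b i).2, ?_⟩
  intro w hw y
  have hGL : G (L ⟨w, hw⟩) = ⟨w, hw⟩ := by
    have := congrArg (fun f => f ⟨w, hw⟩) hG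
    simpa using this
  have hdecomp : L ⟨w, hw⟩ = ∑ j, w (ξ j) • fun k => if j = k then (1:ℝ) else 0 := by
    exact pi_eq_sum_univ _
  have hrepr : ∀ i, b.repr ⟨w, hw⟩ i = ∑ j, (b.repr (G (fun k => if j = k then 1 else 0)) i) * w (ξ j) := by
    intro i
    conv_lhs => rw [← hGL, hdecomp]
    rw [map_sum, map_sum]
    simp [Finset.sum_apply, mul_comm]
  have hsum : (⟨w, hw⟩ : W) = ∑ i, (b.repr ⟨w, hw⟩ i) • b i := (b.sum_repr ⟨w, hw⟩).symm
  have : w y = ((∑ i, (b.repr ⟨w, hw⟩ i) • b i : W) : ℝ → ℝ) y := by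
    rw [← hsum]
  rw [this]
  rw [Submodule.coe_sum]
  simp only [Finset.sum_apply, SetLike.val_smul, Pi.smul_apply, smul_eq_mul]
  congr 1
  ext i
  rw [hrepr i]

lemma curve_rep (W : Submodule ℝ (ℝ → ℝ)) [FiniteDimensional ℝ W] (T : ℝ)
    (w w' : ℝ → ℝ → ℝ)
    (hmem : ∀ t ∈ Icc (0:ℝ) T, w t ∈ W ∧ w' t ∈ W)
    (hderiv : ∀ t ∈ Icc (0:ℝ) T, ∀ x, HasDerivAt (fun s => w s x) (w' t x) t)
    (hcont : ∀ x, ContinuousOn (fun t => w' t x) (Icc (0:ℝ) T)) :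
    ∃ (n : ℕ) (e : Fin n → ℝ → ℝ) (γ γ' : Fin n → ℝ → ℝ),
      (∀ i, e i ∈ W) ∧
      (∀ t ∈ Icc (0:ℝ) T, ∀ x, w t x = ∑ i, γ i t * e i x) ∧
      (∀ t ∈ Icc (0:ℝ) T, ∀ x, w' t x = ∑ i, γ' i t * e i x) ∧
      (∀ i, ∀ t ∈ Icc (0:ℝ) T, HasDerivAt (γ i) (γ' i t) t) ∧
      (∀ i, ContinuousOn (γ' i) (Icc (0:ℝ) T)) ∧
      (∀ i, ContinuousOn (γ i) (Icc (0:ℝ) T)) := by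
  obtain ⟨n, e, m, ξ, A, heW, hrep⟩ := coeff_rep W
  refine ⟨n, e, fun i t => ∑ j, A i j * w t (ξ j), fun i t => ∑ j, A i j * w' t (ξ j),
    heW, ?_, ?_, ?_, ?_, ?_⟩
  · intro t ht x; exact hrep (w t) (hmem t ht).1 x
  · intro t ht x
    have h1 := hrep (w' t) (hmem t ht).2 x
    rw [h1]
  · intro i t ht
    exact HasDerivAt.fun_sum (fun j _ => ((hderiv t ht (ξ j)).const_mul (A i j)))
  · intro i
    exact continuousOn_finset_sum _ (fun j _ => ((hcont (ξ j)).const_smul (A i j)))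
  · intro i
    refine continuousOn_finset_sum _ (fun j _ => ?_)
    have : ∀ t ∈ Icc (0:ℝ) T, ContinuousAt (fun s => A i j * w s (ξ j)) t := by
      intro t ht
      exact ((hderiv t ht (ξ j)).continuousAt).const_mul _
    exact fun t ht => (this t ht).continuousWithinAt

lemma expand_integral (φ : ℝ → ℝ) (hφ : ContinuousOn φ (Icc (0:ℝ) 1))
    {n m : ℕ} (e : Fin n → ℝ → ℝ) (he : ∀ i, ContinuousOn (e i) (Icc (0:ℝ) 1))
    (f : Fin m → ℝ → ℝ) (hf : ∀ j, ContinuousOn (f j) (Icc (0:ℝ) 1))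
    (c : Fin n → ℝ) (d : Fin m → ℝ) :
    (∫ x in (0:ℝ)..1, φ x * ((∑ i, c i * e i x) * (∑ j, d j * f j x)))
      = ∑ i, ∑ j, c i * d j * ∫ x in (0:ℝ)..1, φ x * (e i x * f j x) := by
  have hInt : ∀ i j, IntervalIntegrable (fun x => φ x * (e i x * f j x)) volume 0 1 := by
    intro i j
    apply ContinuousOn.intervalIntegrable
    rw [uIcc_of_le (by norm_num : (0:ℝ) ≤ 1)]
    exact hφ.mul ((he i).mul (hf j))
  have hIntIn : ∀ i j, IntervalIntegrable (fun y => c i * d j * (φ y * (e i y * f j y))) volume 0 1 :=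
    fun i j => (hInt i j).const_mul _
  have h2 : ∀ i : Fin n, IntervalIntegrable (fun x => ∑ j, c i * d j * (φ x * (e i x * f j x))) volume 0 1 := by
    intro i
    have := IntervalIntegrable.sum (μ := volume) (a := (0:ℝ)) (b := 1) Finset.univ
      (f := fun j x => c i * d j * (φ x * (e i x * f j x))) (fun j _ => hIntIn i j)
    simpa [Finset.sum_fn] using this
  calc (∫ x in (0:ℝ)..1, φ x * ((∑ i, c i * e i x) * (∑ j, d j * f j x)))
      = ∫ x in (0:ℝ)..1, ∑ i, ∑ j, c i * d j * (φ x * (e i x * f j x)) := by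
        congr 1
        funext x
        rw [Finset.sum_mul_sum, Finset.mul_sum]
        refine Finset.sum_congr rfl (fun i _ => ?_)
        rw [Finset.mul_sum]
        exact Finset.sum_congr rfl (fun j _ => by ring)
    _ = ∑ i, ∫ x in (0:ℝ)..1, ∑ j, c i * d j * (φ x * (e i x * f j x)) :=
        intervalIntegral.integral_finset_sum (fun i _ => h2 i)
    _ = ∑ i, ∑ j, ∫ x in (0:ℝ)..1, c i * d j * (φ x * (e i x * f j x)) :=
        Finset.sum_congr rfl (fun i _ =>
          intervalIntegral.integral_finset_sum (fun j _ => hIntIn i j))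
    _ = ∑ i, ∑ j, c i * d j * ∫ x in (0:ℝ)..1, φ x * (e i x * f j x) :=
        Finset.sum_congr rfl (fun i _ => Finset.sum_congr rfl (fun j _ =>
          intervalIntegral.integral_const_mul _ _))

lemma quad_facts {n : ℕ} (e : Fin n → ℝ → ℝ) (he : ∀ i, ContinuousOn (e i) (Icc (0:ℝ) 1))
    (T : ℝ) (γ γ' : Fin n → ℝ → ℝ)
    (hγd : ∀ i, ∀ t ∈ Icc (0:ℝ) T, HasDerivAt (γ i) (γ' i t) t)
    (w w' : ℝ → ℝ → ℝ)
    (hw : ∀ t ∈ Icc (0:ℝ) T, ∀ x, w t x = ∑ i, γ i t * e i x)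
    (hw' : ∀ t ∈ Icc (0:ℝ) T, ∀ x, w' t x = ∑ i, γ' i t * e i x) :
    ∀ t ∈ Icc (0:ℝ) T,
      HasDerivAt
        (fun s => ∑ i, ∑ j, γ i s * γ j s * (∫ x in (0:ℝ)..1, (1:ℝ) * (e i x * e j x)))
        (2 * L2ip (w' t) (w t)) t ∧
      L2nsq (w t)
        = ∑ i, ∑ j, γ i t * γ j t * (∫ x in (0:ℝ)..1, (1:ℝ) * (e i x * e j x)) := by
  set M : Fin n → Fin n → ℝ := fun i j => ∫ x in (0:ℝ)..1, (1:ℝ) * (e i x * e j x) with hM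
  have hMsym : ∀ i j, M i j = M j i := by
    intro i j
    simp only [hM]
    congr 1
    funext x
    ring
  have hone : ContinuousOn (fun _ : ℝ => (1:ℝ)) (Icc (0:ℝ) 1) := continuousOn_const
  intro t ht
  have hB : L2ip (w' t) (w t) = ∑ i, ∑ j, γ' i t * γ j t * M i j := by
    unfold L2ip
    calc (∫ x in (0:ℝ)..1, w' t x * w t x)
        = ∫ x in (0:ℝ)..1, (1:ℝ) * ((∑ i, γ' i t * e i x) * (∑ j, γ j t * e j x)) := by
          congr 1
          funext x
          rw [hw' t ht x, hw t ht x]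
          ring
      _ = ∑ i, ∑ j, γ' i t * γ j t * M i j :=
          expand_integral _ hone e he e he _ _
  constructor
  · have hC : HasDerivAt
        (fun s => ∑ i, ∑ j, γ i s * γ j s * M i j)
        (∑ i, ∑ j, (γ' i t * γ j t + γ i t * γ' j t) * M i j) t := by
      refine HasDerivAt.fun_sum (fun i _ => HasDerivAt.fun_sum (fun j _ => ?_))
      exact ((hγd i t ht).mul (hγd j t ht)).mul_const (M i j)
    have hswap : ∑ i, ∑ j, γ i t * γ' j t * M i j = ∑ i, ∑ j, γ' i t * γ j t * M i j := by
      rw [Finset.sum_comm]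
      refine Finset.sum_congr rfl (fun i _ => Finset.sum_congr rfl (fun j _ => ?_))
      rw [hMsym j i]
      ring
    have hval : (∑ i, ∑ j, (γ' i t * γ j t + γ i t * γ' j t) * M i j)
        = 2 * L2ip (w' t) (w t) := by
      rw [hB]
      have : ∀ i j : Fin n, (γ' i t * γ j t + γ i t * γ' j t) * M i j
          = γ' i t * γ j t * M i j + γ i t * γ' j t * M i j := fun i j => by ring
      simp only [this]
      have expand2 : ∑ i, ∑ j, (γ' i t * γ j t * M i j + γ i t * γ' j t * M i j)
          = (∑ i, ∑ j, γ' i t * γ j t * M i j) + ∑ i, ∑ j, γ i t * γ' j t * M i j := by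
        rw [← Finset.sum_add_distrib]
        exact Finset.sum_congr rfl (fun i _ => Finset.sum_add_distrib)
      rw [expand2, hswap]
      ring
    exact hval ▸ hC
  · unfold L2nsq
    calc (∫ x in (0:ℝ)..1, (w t x) ^ 2)
        = ∫ x in (0:ℝ)..1, (1:ℝ) * ((∑ i, γ i t * e i x) * (∑ j, γ j t * e j x)) := by
          congr 1
          funext x
          rw [hw t ht x]
          ring
      _ = ∑ i, ∑ j, γ i t * γ j t * M i j :=
          expand_integral _ hone e he e he _ _

/-- Energy identity for the Galerkin semi-discretization:
`E_h(t) = E_h(s) − ∫ₛᵗ ∫₀¹ a u_h² dx dr`; for `a ≥ 0` the discrete energy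
decays monotonically. -/
theorem stmt11 (V Q : Submodule ℝ (ℝ → ℝ))
    (hVfd : FiniteDimensional ℝ ↥V) (hQfd : FiniteDimensional ℝ ↥Q)
    (hV : ∀ v ∈ V, ContDiffOn ℝ 1 v (Icc (0:ℝ) 1))
    (hQ : ∀ q ∈ Q, ContinuousOn q (Icc (0:ℝ) 1))
    (a : ℝ → ℝ) (ha : ContinuousOn a (Icc (0:ℝ) 1))
    (T : ℝ) (hT : 0 < T)
    (uh ph uh' ph' : ℝ → ℝ → ℝ)
    (hsol : IsSemiDiscreteSolution T a V Q uh ph uh' ph') :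
    (∀ s t : ℝ, 0 ≤ s → s ≤ t → t ≤ T →
      (1/2) * (L2nsq (uh t) + L2nsq (ph t))
        = (1/2) * (L2nsq (uh s) + L2nsq (ph s))
          - ∫ r in s..t, ∫ x in (0:ℝ)..1, a x * (uh r x) ^ 2) ∧
    ((∀ x ∈ Icc (0:ℝ) 1, 0 ≤ a x) →
      AntitoneOn (fun t => (1/2) * (L2nsq (uh t) + L2nsq (ph t))) (Icc (0:ℝ) T)) := by
  obtain ⟨hmem, hd, hc, hweak⟩ := hsol
  -- coefficient representations
  obtain ⟨nV, eV, γu, γu', heVmem, hu, hu', hγud, hγu'c, hγuc⟩ :=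
    curve_rep V T uh uh' (fun t ht => ⟨(hmem t ht).1, (hmem t ht).2.2.1⟩)
      (fun t ht x => (hd t ht x).1) (fun x => (hc x).1)
  obtain ⟨nQ, eQ, γp, γp', heQmem, hp, hp', hγpd, hγp'c, hγpc⟩ :=
    curve_rep Q T ph ph' (fun t ht => ⟨(hmem t ht).2.1, (hmem t ht).2.2.2⟩)
      (fun t ht x => (hd t ht x).2) (fun x => (hc x).2)
  have heVc : ∀ i, ContinuousOn (eV i) (Icc (0:ℝ) 1) :=
    fun i => (hV _ (heVmem i)).continuousOn
  have heQc : ∀ i, ContinuousOn (eQ i) (Icc (0:ℝ) 1) := fun i => hQ _ (heQmem i)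
  -- quadratic forms
  have hQu := quad_facts eV heVc T γu γu' hγud uh uh' hu hu'
  have hQp := quad_facts eQ heQc T γp γp' hγpd ph ph' hp hp'
  set Gu : ℝ → ℝ := fun s => ∑ i, ∑ j, γu i s * γu j s *
      (∫ x in (0:ℝ)..1, (1:ℝ) * (eV i x * eV j x)) with hGu
  set Gp : ℝ → ℝ := fun s => ∑ i, ∑ j, γp i s * γp j s *
      (∫ x in (0:ℝ)..1, (1:ℝ) * (eQ i x * eQ j x)) with hGp
  set D : ℝ → ℝ := fun s => ∑ i, ∑ j, γu i s * γu j s *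
      (∫ x in (0:ℝ)..1, a x * (eV i x * eV j x)) with hD
  -- the damping integral
  have hDval : ∀ t ∈ Icc (0:ℝ) T,
      (∫ x in (0:ℝ)..1, a x * (uh t x) ^ 2) = D t := by
    intro t ht
    calc (∫ x in (0:ℝ)..1, a x * (uh t x) ^ 2)
        = ∫ x in (0:ℝ)..1, a x * ((∑ i, γu i t * eV i x) * (∑ j, γu j t * eV j x)) := by
          congr 1
          funext x
          rw [hu t ht x]
          ring
      _ = D t := expand_integral a ha eV heVc eV heVc _ _
  -- the energy function agrees with G on [0, T]
  set G : ℝ → ℝ := fun s => (1/2) * (Gu s + Gp s) with hG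
  have hEeq : ∀ t ∈ Icc (0:ℝ) T,
      (1/2) * (L2nsq (uh t) + L2nsq (ph t)) = G t := by
    intro t ht
    rw [hG, (hQu t ht).2, (hQp t ht).2]
  -- derivative of G
  have hGderiv : ∀ t ∈ Icc (0:ℝ) T, HasDerivAt G (-(D t)) t := by
    intro t ht
    have h1 := (hQu t ht).1
    have h2 := (hQp t ht).1
    have hsum := (h1.add h2).const_mul (1/2 : ℝ)
    have hval : (1/2 : ℝ) * (2 * L2ip (uh' t) (uh t) + 2 * L2ip (ph' t) (ph t))
        = -(D t) := by
      obtain ⟨hw1, hw2⟩ := hweak t ht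
      have e1 := hw1 (uh t) (hmem t ht).1
      have e2 := hw2 (ph t) (hmem t ht).2.1
      have hcomm : L2ip (ph t) (deriv (uh t)) = L2ip (deriv (uh t)) (ph t) := by
        unfold L2ip
        congr 1
        funext x
        ring
      have hda : L2ip (fun x => a x * uh t x) (uh t)
          = ∫ x in (0:ℝ)..1, a x * (uh t x) ^ 2 := by
        unfold L2ip
        congr 1
        funext x
        ring
      rw [hcomm] at e1
      rw [hda, hDval t ht] at e1
      linarith
    exact hval ▸ hsum
  -- continuity of D
  have hDcont : ContinuousOn D (Icc (0:ℝ) T) := by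
    rw [hD]
    refine continuousOn_finset_sum _ (fun i _ => continuousOn_finset_sum _ (fun j _ => ?_))
    exact ((hγuc i).mul (hγuc j)).mul continuousOn_const
  -- part 1
  have part1 : ∀ s t : ℝ, 0 ≤ s → s ≤ t → t ≤ T →
      (1/2) * (L2nsq (uh t) + L2nsq (ph t))
        = (1/2) * (L2nsq (uh s) + L2nsq (ph s))
          - ∫ r in s..t, ∫ x in (0:ℝ)..1, a x * (uh r x) ^ 2 := by
    intro s t hs hst htT
    have hsub : Icc s t ⊆ Icc (0:ℝ) T := Icc_subset_Icc hs htT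
    have hFTC : (∫ r in s..t, -(D r)) = G t - G s := by
      apply intervalIntegral.integral_eq_sub_of_hasDeriv_right_of_le hst
      · intro r hr
        exact ((hGderiv r (hsub hr)).continuousAt).continuousWithinAt
      · intro r hr
        exact (hGderiv r (hsub (Ioo_subset_Icc_self hr))).hasDerivWithinAt
      · apply ContinuousOn.intervalIntegrable
        rw [uIcc_of_le hst]
        exact (hDcont.mono hsub).neg
    have hcong : (∫ r in s..t, ∫ x in (0:ℝ)..1, a x * (uh r x) ^ 2) = ∫ r in s..t, D r := by
      apply intervalIntegral.integral_congr
      intro r hr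
      rw [uIcc_of_le hst] at hr
      exact hDval r (hsub hr)
    rw [hEeq t ⟨le_trans hs hst, htT⟩, hEeq s ⟨hs, le_trans hst htT⟩, hcong]
    have : (∫ r in s..t, D r) = -(G t - G s) := by
      rw [← hFTC, ← intervalIntegral.integral_neg]
      simp
    rw [this]
    ring
  refine ⟨part1, fun ha0 => ?_⟩
  intro x hx y hy hxy
  have := part1 x y hx.1 hxy hy.2
  dsimp only
  rw [this]
  have hnn : 0 ≤ ∫ r in x..y, ∫ z in (0:ℝ)..1, a z * (uh r z) ^ 2 := by
    apply intervalIntegral.integral_nonneg hxy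
    intro u _
    apply intervalIntegral.integral_nonneg (by norm_num : (0:ℝ) ≤ 1)
    intro z hz
    exact mul_nonneg (ha0 z hz) (sq_nonneg _)
  linarith
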